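/- If (W,H) is a global minimizer of the regularized objective f, then the classifier rows are centered: Σ_{k=1}^K w_k = 0; equivalently, ΠW = W. -/

import Mathlib

open Finset

/-- Softmax probability of coordinate `k` for logits `z ∈ ℝ^K`. -/
noncomputable def softmax {K : ℕ} (z : Fin K → ℝ) (k : Fin K) : ℝ :=
  Real.exp (z k) / ∑ j, Real.exp (z j)

/-- Pick-all-labels (PAL) loss: `L_PAL(z,S) = ∑_{k∈S} -log(softmax(z)_k)`. -/
noncomputable def palLoss {K : ℕ} (z : Fin K → ℝ) (S : Finset (Fin K)) : ℝ :=
  ∑ k ∈ S, -Real.log (softmax z k)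

/-- The family of label sets `S ⊆ [K]` with `|S| = m`. -/
def msets (K m : ℕ) : Finset (Finset (Fin K)) := Finset.univ.powersetCard m

/-- Total sample count `N = ∑_{m=1}^M ∑_{|S|=m} r_{m,S}`. -/
def totalN (K M : ℕ) (r : ℕ → Finset (Fin K) → ℕ) : ℕ :=
  ∑ m ∈ Finset.Icc 1 M, ∑ S ∈ msets K m, r m S

/-- Empirical PAL risk `g(WH)`. -/
noncomputable def empRisk (K d M : ℕ) (r : ℕ → Finset (Fin K) → ℕ)
    (W : Fin K → Fin d → ℝ) (h : ℕ → Finset (Fin K) → ℕ → Fin d → ℝ) : ℝ :=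
  (1 / (totalN K M r : ℝ)) *
    ∑ m ∈ Finset.Icc 1 M, ∑ S ∈ msets K m, ∑ i ∈ Finset.range (r m S),
      palLoss (fun k => ∑ t, W k t * h m S i t) S

/-- Squared Frobenius norm `‖W‖_F²`. -/
noncomputable def wNormSq (K d : ℕ) (W : Fin K → Fin d → ℝ) : ℝ :=
  ∑ k, ∑ t, (W k t) ^ 2

/-- Squared feature norm `‖H‖_F² = ∑_{m,S,i} ‖h_{m,S,i}‖²`. -/
noncomputable def hNormSq (K d M : ℕ) (r : ℕ → Finset (Fin K) → ℕ)
    (h : ℕ → Finset (Fin K) → ℕ → Fin d → ℝ) : ℝ :=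
  ∑ m ∈ Finset.Icc 1 M, ∑ S ∈ msets K m, ∑ i ∈ Finset.range (r m S), ∑ t, (h m S i t) ^ 2

/-- Regularized objective `f(W,H) = g(WH) + (λ_W/2)‖W‖_F² + (λ_H/2)‖H‖_F²`. -/
noncomputable def objective (K d M : ℕ) (r : ℕ → Finset (Fin K) → ℕ) (lW lH : ℝ)
    (W : Fin K → Fin d → ℝ) (h : ℕ → Finset (Fin K) → ℕ → Fin d → ℝ) : ℝ :=
  empRisk K d M r W h + lW / 2 * wNormSq K d W + lH / 2 * hNormSq K d M r h
lemma softmax_shift {K : ℕ} (z : Fin K → ℝ) (c : ℝ) (k : Fin K) :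
    softmax (fun j => z j + c) k = softmax z k := by
  unfold softmax
  simp only [Real.exp_add]
  rw [← Finset.sum_mul, mul_div_mul_right _ _ (Real.exp_ne_zero c)]

lemma palLoss_shift {K : ℕ} (z : Fin K → ℝ) (c : ℝ) (S : Finset (Fin K)) :
    palLoss (fun j => z j + c) S = palLoss z S := by
  unfold palLoss
  exact Finset.sum_congr rfl fun k _ => by rw [softmax_shift]

set_option maxHeartbeats 1000000 in
/-- At any global minimizer `(W,H)` of the regularized objective `f`,
the classifier rows are centered: `∑_{k=1}^K w_k = 0`; equivalently, `ΠW = W`. -/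
theorem classifier_centering_at_global_min {K d M : ℕ} (hK : 2 ≤ K) (hd : 1 ≤ d)
    (hM1 : 1 ≤ M) (hMK : M ≤ K - 1)
    (r : ℕ → Finset (Fin K) → ℕ) (hN : 0 < totalN K M r)
    (lW lH : ℝ) (hlW : 0 < lW) (hlH : 0 < lH)
    (W : Fin K → Fin d → ℝ) (h : ℕ → Finset (Fin K) → ℕ → Fin d → ℝ)
    (hmin : ∀ (W' : Fin K → Fin d → ℝ) (h' : ℕ → Finset (Fin K) → ℕ → Fin d → ℝ),
      objective K d M r lW lH W h ≤ objective K d M r lW lH W' h') :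
    (∀ t : Fin d, ∑ k : Fin K, W k t = 0) ∧
      (fun k t => W k t - (1 / (K : ℝ)) * ∑ l : Fin K, W l t) = W := by
  have hK0 : (K : ℝ) ≠ 0 := by
    have : 0 < K := lt_of_lt_of_le (by norm_num) hK
    exact_mod_cast this.ne'
  set a : Fin d → ℝ := fun t => (1 / (K : ℝ)) * ∑ l, W l t with ha
  set W' : Fin K → Fin d → ℝ := fun k t => W k t - a t with hW'
  have colsum : ∀ t, ∑ k : Fin K, W k t = (K : ℝ) * a t := by
    intro t
    simp only [ha]
    field_simp
  -- the empirical risk is invariant under the shift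
  have hrisk : empRisk K d M r W' h = empRisk K d M r W h := by
    unfold empRisk
    refine congrArg (fun x => (1 / (totalN K M r : ℝ)) * x) ?_
    refine Finset.sum_congr rfl fun m _ => Finset.sum_congr rfl fun S _ =>
      Finset.sum_congr rfl fun i _ => ?_
    have hz : (fun k => ∑ t, W' k t * h m S i t)
        = fun k => (∑ t, W k t * h m S i t) + (-∑ t, a t * h m S i t) := by
      funext k
      simp only [hW', sub_mul, Finset.sum_sub_distrib]
      ring
    rw [hz, palLoss_shift]
  have key : ∀ t, ∑ k : Fin K, (W' k t) ^ 2
      = (∑ k : Fin K, (W k t) ^ 2) - (K : ℝ) * (a t) ^ 2 := by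
    intro t
    have hexp : ∀ k : Fin K, (W' k t) ^ 2
        = (W k t) ^ 2 - 2 * a t * W k t + (a t) ^ 2 := by
      intro k; simp only [hW']; ring
    simp only [hexp]
    rw [Finset.sum_add_distrib, Finset.sum_sub_distrib, ← Finset.mul_sum, colsum t,
      Finset.sum_const, Finset.card_univ, Fintype.card_fin, nsmul_eq_mul]
    ring
  have hsum : wNormSq K d W' = wNormSq K d W - ∑ t, (K : ℝ) * (a t) ^ 2 := by
    unfold wNormSq
    rw [Finset.sum_comm]
    calc ∑ t, ∑ k, (W' k t) ^ 2
        = ∑ t, ((∑ k : Fin K, (W k t) ^ 2) - (K : ℝ) * (a t) ^ 2) :=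
          Finset.sum_congr rfl fun t _ => key t
      _ = (∑ t, ∑ k, (W k t) ^ 2) - ∑ t, (K : ℝ) * (a t) ^ 2 := Finset.sum_sub_distrib _ _
      _ = (∑ k, ∑ t, (W k t) ^ 2) - ∑ t, (K : ℝ) * (a t) ^ 2 := by rw [Finset.sum_comm]
  have hle := hmin W' h
  unfold objective at hle
  rw [hrisk, hsum] at hle
  have hnonneg : (0 : ℝ) ≤ ∑ t, (K : ℝ) * (a t) ^ 2 :=
    Finset.sum_nonneg fun t _ => by positivity
  have hsumz : ∑ t, (K : ℝ) * (a t) ^ 2 = 0 := by nlinarith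
  have hzero : ∀ t, a t = 0 := by
    intro t
    have := (Finset.sum_eq_zero_iff_of_nonneg fun t (_ : t ∈ Finset.univ) => by
      positivity : (∑ t, (K : ℝ) * (a t) ^ 2 = 0) ↔ _).mp hsumz t (Finset.mem_univ t)
    have hK2 : (0 : ℝ) < K := by positivity
    have h2 : (a t) ^ 2 = 0 := by
      rcases mul_eq_zero.mp this with h' | h'
      · exact absurd h' hK0
      · exact h'
    exact pow_eq_zero_iff (two_ne_zero) |>.mp h2
  have hcol : ∀ t : Fin d, ∑ k : Fin K, W k t = 0 := by
    intro t; rw [colsum t, hzero t, mul_zero]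
  refine ⟨hcol, ?_⟩
  funext k t
  simp [hW', hzero t]
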